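/- Let ε ∈ (0, 1/2), P_m > 0, and P_a, P_r be reals with 0 < P_a ≤ 2ε·P_m/(1 − ε²) and P_a ≤ P_r ≤ P_a/ε. For reals p_j and 0 ≤ P_min < P_max, define the outage λ = 0 if P_r ≥ P_max, λ = p_j·(P_max − P_r)/(P_max − P_min) if P_min ≤ P_r ≤ P_max, and λ = p_j if P_r ≤ P_min. Then for every (p_j, P_min, P_max) satisfying the covertness constraints p_j ≥ 1 − ε, P_max − P_min ≥ (p_j/ε)·P_a, (p_j/(1−ε) − 1)·P_max + P_min ≥ (p_j/(1−ε))·P_a, p_j ≤ 1, and the average jamming power constraint (p_j/2)·(P_min + P_max) ≤ P_m, one has λ ≥ 1 − ε·P_r/P_a; moreover, the choice p_j = 1 − ε, P_min = P_a, P_max = P_a/ε satisfies all these constraints and achieves λ = 1 − ε·P_r/P_a. -/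

import Mathlib

theorem min_outage_case_Pa_le_Pr_le_Pa_div_eps
    (ε Pm Pa Pr : ℝ)
    (hε0 : 0 < ε) (hε1 : ε < 1/2) (hPm : 0 < Pm)
    (hPa : 0 < Pa) (hPaPm : Pa ≤ 2 * ε * Pm / (1 - ε ^ 2))
    (hPr1 : Pa ≤ Pr) (hPr2 : Pr ≤ Pa / ε)
    (lam : ℝ → ℝ → ℝ → ℝ)
    (hlam : ∀ pj Pmin Pmax : ℝ, lam pj Pmin Pmax =
      if Pmax ≤ Pr then 0
      else if Pmin ≤ Pr then pj * (Pmax - Pr) / (Pmax - Pmin)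
      else pj) :
    (∀ pj Pmin Pmax : ℝ,
        1 - ε ≤ pj → pj ≤ 1 → 0 ≤ Pmin → Pmin < Pmax →
        pj / ε * Pa ≤ Pmax - Pmin →
        pj / (1 - ε) * Pa ≤ (pj / (1 - ε) - 1) * Pmax + Pmin →
        pj / 2 * (Pmin + Pmax) ≤ Pm →
        1 - ε * Pr / Pa ≤ lam pj Pmin Pmax) ∧
    (1 - ε ≤ (1 - ε) ∧ (1 - ε : ℝ) ≤ 1 ∧ 0 ≤ Pa ∧ Pa < Pa / ε ∧
      (1 - ε) / ε * Pa ≤ Pa / ε - Pa ∧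
      (1 - ε) / (1 - ε) * Pa ≤ ((1 - ε) / (1 - ε) - 1) * (Pa / ε) + Pa ∧
      (1 - ε) / 2 * (Pa + Pa / ε) ≤ Pm ∧
      lam (1 - ε) Pa (Pa / ε) = 1 - ε * Pr / Pa) := by
  have h1e : (0:ℝ) < 1 - ε := by linarith
  have hεne : ε ≠ 0 := ne_of_gt hε0
  have hPane : Pa ≠ 0 := ne_of_gt hPa
  have ht : (ε * Pr / Pa) * Pa = ε * Pr := div_mul_cancel₀ _ hPane
  constructor
  · intro pj Pmin Pmax hpj1 hpj2 hPmin0 hD h5 h6 _h7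
    have hpj0 : 0 < pj := by linarith
    -- clear divisions in h5 and h6
    have h5' : pj * Pa ≤ ε * (Pmax - Pmin) := by
      have := mul_le_mul_of_nonneg_left h5 hε0.le
      have e : ε * (pj / ε * Pa) = pj * Pa := by field_simp
      linarith [e ▸ this]
    have h6' : pj * Pa ≤ (pj - (1 - ε)) * Pmax + (1 - ε) * Pmin := by
      have := mul_le_mul_of_nonneg_left h6 h1e.le
      have e1 : (1 - ε) * (pj / (1 - ε) * Pa) = pj * Pa := by field_simp
      have e2 : (1 - ε) * ((pj / (1 - ε) - 1) * Pmax + Pmin)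
          = (pj - (1 - ε)) * Pmax + (1 - ε) * Pmin := by field_simp
      linarith [e1 ▸ e2 ▸ this]
    rw [hlam]
    split_ifs with h1 h2
    · -- Pmax ≤ Pr : show 1 - ε*Pr/Pa ≤ 0 since ε*Pmax ≥ Pa
      have hmax : Pa ≤ ε * Pmax := by nlinarith
      have : Pa ≤ ε * Pr := by nlinarith
      nlinarith
    · have hDpos : (0:ℝ) < Pmax - Pmin := by linarith
      rw [le_div_iff₀ hDpos]
      nlinarith [mul_nonneg (sub_nonneg.2 hPr1) (by linarith : (0:ℝ) ≤ ε * (Pmax - Pmin) - pj * Pa)]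
    · -- Pr < Pmin : 1 - ε*Pr/Pa ≤ 1 - ε ≤ pj
      have : ε ≤ ε * Pr / Pa := by
        rw [le_div_iff₀ hPa]; nlinarith
      linarith
  · refine ⟨le_refl _, by linarith, hPa.le, ?_, ?_, ?_, ?_, ?_⟩
    · rw [lt_div_iff₀ hε0]; nlinarith
    · apply le_of_eq; field_simp
    · rw [div_self (ne_of_gt h1e)]; ring_nf; exact le_refl Pa
    · have hsq : (0:ℝ) < 1 - ε ^ 2 := by nlinarith
      have hkey : Pa * (1 - ε ^ 2) ≤ 2 * ε * Pm := (le_div_iff₀ hsq).mp hPaPm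
      have e : (1 - ε) / 2 * (Pa + Pa / ε) = Pa * (1 - ε ^ 2) / (2 * ε) := by
        field_simp; ring
      rw [e, div_le_iff₀ (by linarith : (0:ℝ) < 2 * ε)]
      linarith
    · rw [hlam]
      rcases le_or_gt (Pa / ε) Pr with h1 | h1
      · rw [if_pos h1]
        have hPrε : Pr = Pa / ε := le_antisymm hPr2 h1
        rw [hPrε]; field_simp; ring
      · rw [if_neg (not_le.2 h1), if_pos hPr1]
        have hden : Pa / ε - Pa = Pa * (1 - ε) / ε := by field_simp
        rw [hden]
        field_simp
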